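/- Fix k ∈ ℕ with k ≥ 2, let V be a finite set, let S be a (k+1)-uniform hypergraph on V satisfying condition (†), and let ⋆ ∈ V. Define a k-uniform hypergraph R on V by: every k-element subset of V containing ⋆ belongs to R, and a k-element subset e with ⋆ ∉ e belongs to R if and only if e ∪ {⋆} ∈ S. Then K(R) = S. -/
import Mathlib


variable {α : Type*} [DecidableEq α]

/-- `R` is a `k`-uniform hypergraph on the vertex set `V`. -/
def IsHypergraph (k : ℕ) (V : Finset α) (R : Set (Finset α)) : Prop :=
  ∀ e ∈ R, e ⊆ V ∧ e.card = k

/-- The Kay-graph of a `k`-uniform hypergraph `R` on `V`: the `(k+1)`-uniform hypergraph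
on `V` whose hyperedges are the `(k+1)`-element subsets `A` of `V` such that the number of
`k`-element subsets of `A` belonging to `R` is congruent to `k + 1` modulo `2`. -/
def kay (k : ℕ) (V : Finset α) (R : Set (Finset α)) : Set (Finset α) :=
  {A | A ⊆ V ∧ A.card = k + 1 ∧
    {e : Finset α | e ⊆ A ∧ e.card = k ∧ e ∈ R}.ncard % 2 = (k + 1) % 2}

/-- Condition (†) for a `(k+1)`-uniform hypergraph `S` on `V`: for every `(k+2)`-element
subset `W` of `V`, the number of `(k+1)`-element subsets of `W` belonging to `S` is
congruent to `k` modulo `2`. -/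
def dagger (k : ℕ) (V : Finset α) (S : Set (Finset α)) : Prop :=
  ∀ W : Finset α, W ⊆ V → W.card = k + 2 →
    {A : Finset α | A ⊆ W ∧ A.card = k + 1 ∧ A ∈ S}.ncard % 2 = k % 2

/-- Given a `(k+1)`-uniform hypergraph `S` on `V` satisfying (†) and a point `⋆ ∈ V`,
the `k`-uniform hypergraph `R` consisting of all `k`-element subsets of `V` containing `⋆`
together with those `k`-element subsets `e` not containing `⋆` with `e ∪ {⋆} ∈ S`
has Kay-graph exactly `S`. -/
lemma ncard_aux (k : ℕ) (A : Finset α) (P : Finset α → Prop) [DecidablePred P] :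
    {e : Finset α | e ⊆ A ∧ e.card = k ∧ P e}.ncard
      = ((A.powersetCard k).filter P).card := by
  rw [← Set.ncard_coe_finset]
  congr 1
  ext e
  simp [Finset.mem_powersetCard, and_assoc]

lemma key_parity (k : ℕ) (V : Finset α) (S : Set (Finset α)) (hS : IsHypergraph (k + 1) V S)
    (hdag : dagger k V S) (star : α) (hstar : star ∈ V) (A : Finset α)
    (hAV : A ⊆ V) (hA : A.card = k + 1) :
    ({e : Finset α | e ⊆ A ∧ e.card = k ∧ e ∈ {e : Finset α | e ⊆ V ∧ e.card = k ∧
      (star ∈ e ∨ (star ∉ e ∧ insert star e ∈ S))}}.ncard % 2 = (k + 1) % 2 ↔ A ∈ S) := by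
  classical
  rw [ncard_aux]
  by_cases hsA : star ∈ A
  · -- case star ∈ A
    have hfilter : (A.powersetCard k).filter (fun e => e ∈ {e : Finset α | e ⊆ V ∧ e.card = k ∧
          (star ∈ e ∨ (star ∉ e ∧ insert star e ∈ S))})
        = (A.powersetCard k).filter (fun e => star ∈ e ∨ (star ∉ e ∧ insert star e ∈ S)) := by
      apply Finset.filter_congr
      intro e he
      rw [Finset.mem_powersetCard] at he
      simp only [Set.mem_setOf_eq]
      constructor
      · tauto
      · intro h; exact ⟨he.1.trans hAV, he.2, h⟩
    rw [hfilter]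
    -- the unique k-subset of A not containing star is A.erase star
    have herase : ∀ e ∈ A.powersetCard k, star ∉ e → e = A.erase star := by
      intro e he hse
      rw [Finset.mem_powersetCard] at he
      apply Finset.eq_of_subset_of_card_le
      · intro x hx; exact Finset.mem_erase.2 ⟨fun h => hse (h ▸ hx), he.1 hx⟩
      · rw [Finset.card_erase_of_mem hsA, hA, he.2]
        omega
    have hsplit : (A.powersetCard k).filter (fun e => star ∈ e ∨ (star ∉ e ∧ insert star e ∈ S))
        = (A.powersetCard k).filter (fun e => star ∈ e)
          ∪ (A.powersetCard k).filter (fun e => star ∉ e ∧ insert star e ∈ S) := by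
      rw [← Finset.filter_or]
    rw [hsplit, Finset.card_union_of_disjoint]
    swap
    · rw [Finset.disjoint_filter]
      tauto
    have hcard1 : ((A.powersetCard k).filter (fun e => star ∈ e)).card = k := by
      have hneg : ((A.powersetCard k).filter (fun e => ¬ star ∈ e)) = {A.erase star} := by
        ext e
        simp only [Finset.mem_filter, Finset.mem_singleton]
        constructor
        · rintro ⟨he, hse⟩; exact herase e he hse
        · rintro rfl
          refine ⟨Finset.mem_powersetCard.2 ⟨Finset.erase_subset _ _, ?_⟩,
            Finset.notMem_erase _ _⟩
          rw [Finset.card_erase_of_mem hsA, hA]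
          omega
      have := Finset.card_filter_add_card_filter_not
        (s := A.powersetCard k) (p := fun e => star ∈ e)
      rw [hneg, Finset.card_singleton, Finset.card_powersetCard, hA,
        Nat.choose_succ_self_right] at this
      omega
    have hcard2 : ((A.powersetCard k).filter (fun e => star ∉ e ∧ insert star e ∈ S)).card
        = if A ∈ S then 1 else 0 := by
      split_ifs with hAS
      · have : ((A.powersetCard k).filter (fun e => star ∉ e ∧ insert star e ∈ S))
            = {A.erase star} := by
          ext e
          simp only [Finset.mem_filter, Finset.mem_singleton]
          constructor
          · rintro ⟨he, hse, _⟩; exact herase e he hse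
          · rintro rfl
            refine ⟨Finset.mem_powersetCard.2 ⟨Finset.erase_subset _ _, ?_⟩,
              Finset.notMem_erase _ _, ?_⟩
            · rw [Finset.card_erase_of_mem hsA, hA]
              omega
            · rw [Finset.insert_erase hsA]; exact hAS
        rw [this, Finset.card_singleton]
      · rw [Finset.card_eq_zero, Finset.filter_eq_empty_iff]
        rintro e he ⟨hse, hins⟩
        have := herase e he hse
        rw [this, Finset.insert_erase hsA] at hins
        exact hAS hins
    rw [hcard1, hcard2]
    split_ifs with hAS <;> simp [hAS] <;> omega
  · -- case star ∉ A
    have hfilter : (A.powersetCard k).filter (fun e => e ∈ {e : Finset α | e ⊆ V ∧ e.card = k ∧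
          (star ∈ e ∨ (star ∉ e ∧ insert star e ∈ S))})
        = (A.powersetCard k).filter (fun e => insert star e ∈ S) := by
      apply Finset.filter_congr
      intro e he
      rw [Finset.mem_powersetCard] at he
      have hse : star ∉ e := fun h => hsA (he.1 h)
      simp only [Set.mem_setOf_eq]
      constructor
      · tauto
      · intro h; exact ⟨he.1.trans hAV, he.2, Or.inr ⟨hse, h⟩⟩
    rw [hfilter]
    set W := insert star A with hW
    have hWV : W ⊆ V := Finset.insert_subset hstar hAV
    have hWcard : W.card = k + 2 := by
      rw [hW, Finset.card_insert_of_notMem hsA, hA]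
    have hM := hdag W hWV hWcard
    rw [ncard_aux (k + 1) W (· ∈ S)] at hM
    -- split the dagger count
    have hMsplit := Finset.card_filter_add_card_filter_not
      (s := (W.powersetCard (k + 1)).filter (· ∈ S)) (p := fun B => star ∈ B)
    rw [Finset.filter_filter, Finset.filter_filter] at hMsplit
    have hM1 : ((W.powersetCard (k + 1)).filter (fun B => B ∈ S ∧ star ∈ B)).card
        = ((A.powersetCard k).filter (fun e => insert star e ∈ S)).card := by
      refine Finset.card_bij' (fun B _ => B.erase star) (fun e _ => insert star e) ?_ ?_ ?_ ?_
      · intro B hB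
        simp only [Finset.mem_filter, Finset.mem_powersetCard] at hB ⊢
        obtain ⟨⟨hBW, hBcard⟩, hBS, hsB⟩ := hB
        refine ⟨⟨?_, ?_⟩, ?_⟩
        · intro x hx
          rw [Finset.mem_erase] at hx
          rcases Finset.mem_insert.1 (hBW hx.2) with h | h
          · exact absurd h hx.1
          · exact h
        · rw [Finset.card_erase_of_mem hsB, hBcard]; omega
        · rw [Finset.insert_erase hsB]; exact hBS
      · intro e he
        simp only [Finset.mem_filter, Finset.mem_powersetCard] at he ⊢
        obtain ⟨⟨heA, hecard⟩, heS⟩ := he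
        have hse : star ∉ e := fun h => hsA (heA h)
        refine ⟨⟨Finset.insert_subset_insert _ heA, ?_⟩, heS, Finset.mem_insert_self _ _⟩
        rw [Finset.card_insert_of_notMem hse, hecard]
      · intro B hB
        simp only [Finset.mem_filter] at hB
        exact Finset.insert_erase hB.2.2
      · intro e he
        simp only [Finset.mem_filter, Finset.mem_powersetCard] at he
        have hse : star ∉ e := fun h => hsA (he.1.1 h)
        exact Finset.erase_insert hse
    have hM2 : ((W.powersetCard (k + 1)).filter (fun B => B ∈ S ∧ ¬ star ∈ B)).card
        = if A ∈ S then 1 else 0 := by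
      have hBeq : ∀ B ∈ W.powersetCard (k + 1), star ∉ B → B = A := by
        intro B hB hsB
        rw [Finset.mem_powersetCard] at hB
        apply Finset.eq_of_subset_of_card_le
        · intro x hx
          rcases Finset.mem_insert.1 (hB.1 hx) with h | h
          · exact absurd (h ▸ hx) hsB
          · exact h
        · rw [hA, hB.2]
      split_ifs with hAS
      · have : ((W.powersetCard (k + 1)).filter (fun B => B ∈ S ∧ ¬ star ∈ B)) = {A} := by
          ext B
          simp only [Finset.mem_filter, Finset.mem_singleton]
          constructor
          · rintro ⟨hB, _, hsB⟩; exact hBeq B hB hsB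
          · rintro rfl
            exact ⟨Finset.mem_powersetCard.2 ⟨Finset.subset_insert _ _, hA⟩, hAS, hsA⟩
        rw [this, Finset.card_singleton]
      · rw [Finset.card_eq_zero, Finset.filter_eq_empty_iff]
        rintro B hB ⟨hBS, hsB⟩
        exact hAS (hBeq B hB hsB ▸ hBS)
    rw [hM1, hM2] at hMsplit
    split_ifs at hMsplit with hAS <;> simp [hAS] <;> omega

theorem kay_of_star_hypergraph (k : ℕ) (hk : 2 ≤ k) (V : Finset α) (S : Set (Finset α))
    (hS : IsHypergraph (k + 1) V S) (hdag : dagger k V S) (star : α) (hstar : star ∈ V) :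
    kay k V {e : Finset α | e ⊆ V ∧ e.card = k ∧
      (star ∈ e ∨ (star ∉ e ∧ insert star e ∈ S))} = S := by
  classical
  ext A
  simp only [kay, Set.mem_setOf_eq]
  constructor
  · rintro ⟨hAV, hAcard, hpar⟩
    exact (key_parity k V S hS hdag star hstar A hAV hAcard).1 hpar
  · intro hAS
    obtain ⟨hAV, hAcard⟩ := hS A hAS
    exact ⟨hAV, hAcard, (key_parity k V S hS hdag star hstar A hAV hAcard).2 hAS⟩
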